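/- For any element b of the solvable Lie algebra b = span{E1,E2,E3,E31,E32,A1,A2,A3,A31,A32} and any linear form η on b with η(E3) > 0, every coadjoint transform of η also pairs positively with E3; consequently the coadjoint orbit of the restriction of −(E1*+E2*+E3*) to b and the coadjoint orbit of the restriction of (E1*+E2*+E3*) to b under the connected group B = exp(b) are disjoint. -/

import Mathlib

open Matrix

abbrev M6 := Matrix (Fin 6) (Fin 6) ℝ

noncomputable def E1 : M6 := !![0,0,0,1,0,0; 0,0,0,0,0,0; 0,0,0,0,0,0; 0,0,0,0,0,0; 0,0,0,0,0,0; 0,0,0,0,0,0]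
noncomputable def E2 : M6 := !![0,0,0,0,0,0; 0,0,0,0,1,0; 0,0,0,0,0,0; 0,0,0,0,0,0; 0,0,0,0,0,0; 0,0,0,0,0,0]
noncomputable def E3 : M6 := !![0,0,0,0,0,0; 0,0,0,0,0,0; 0,0,0,0,0,1; 0,0,0,0,0,0; 0,0,0,0,0,0; 0,0,0,0,0,0]
noncomputable def E31 : M6 := !![0,0,0,0,0,1; 0,0,0,0,0,0; 0,0,0,1,0,0; 0,0,0,0,0,0; 0,0,0,0,0,0; 0,0,0,0,0,0]
noncomputable def E32 : M6 := !![0,0,0,0,0,0; 0,0,0,0,0,1; 0,0,0,0,1,0; 0,0,0,0,0,0; 0,0,0,0,0,0; 0,0,0,0,0,0]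
noncomputable def A1 : M6 := !![(1/2),0,0,0,0,0; 0,0,0,0,0,0; 0,0,0,0,0,0; 0,0,0,(-1/2),0,0; 0,0,0,0,0,0; 0,0,0,0,0,0]
noncomputable def A2 : M6 := !![0,0,0,0,0,0; 0,(1/2),0,0,0,0; 0,0,0,0,0,0; 0,0,0,0,0,0; 0,0,0,0,(-1/2),0; 0,0,0,0,0,0]
noncomputable def A3 : M6 := !![0,0,0,0,0,0; 0,0,0,0,0,0; 0,0,(1/2),0,0,0; 0,0,0,0,0,0; 0,0,0,0,0,0; 0,0,0,0,0,(-1/2)]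
noncomputable def A31 : M6 := !![0,0,0,0,0,0; 0,0,0,0,0,0; 1,0,0,0,0,0; 0,0,0,0,0,-1; 0,0,0,0,0,0; 0,0,0,0,0,0]
noncomputable def A32 : M6 := !![0,0,0,0,0,0; 0,0,0,0,0,0; 0,1,0,0,0,0; 0,0,0,0,0,0; 0,0,0,0,0,-1; 0,0,0,0,0,0]
noncomputable def W1 : M6 := !![0,0,0,-1,0,0; 0,0,0,0,0,0; 0,0,0,0,0,0; 1,0,0,0,0,0; 0,0,0,0,0,0; 0,0,0,0,0,0]
noncomputable def W2 : M6 := !![0,0,0,0,0,0; 0,0,0,0,-1,0; 0,0,0,0,0,0; 0,0,0,0,0,0; 0,1,0,0,0,0; 0,0,0,0,0,0]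

noncomputable def gens : Set M6 := {E1, E2, E3, E31, E32, A1, A2, A3, A31, A32, W1, W2}

attribute [local instance 100] LieRing.ofAssociativeRing

noncomputable def gLie : LieSubalgebra ℝ M6 := LieSubalgebra.lieSpan ℝ M6 gens

/-- The solvable subalgebra b = span{E1,E2,E3,E31,E32,A1,A2,A3,A31,A32}. -/
noncomputable def bSub : Submodule ℝ M6 :=
  Submodule.span ℝ {E1, E2, E3, E31, E32, A1, A2, A3, A31, A32}

/-- The connected group B = exp(b), realized as the subgroup of invertible 6×6
matrices generated by exponentials of elements of b. -/
noncomputable def Bgrp : Subgroup M6ˣ :=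
  Subgroup.closure {u : M6ˣ | ∃ x ∈ bSub, (u : M6) = NormedSpace.exp x}

/-- The restriction to b of the linear form E1* + E2* + E3* (values 1 on
E1, E2, E3 and 0 on the remaining basis vectors of b), written via matrix
entries. -/
noncomputable def fpos (x : M6) : ℝ := x 0 3 + x 3 0 + x 1 4 + x 4 1 + x 2 5

/- ### Auxiliary material -/

@[simp] lemma cons_val_five' {α : Type*} {m : ℕ} (x : α) (u : Fin (m + 5) → α) :
    vecCons x u 5 = vecHead (vecTail (vecTail (vecTail (vecTail u)))) := rfl

section StdDecomp

local notation "S" => Matrix.single (α := ℝ) (m := Fin 6) (n := Fin 6)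

lemma hE1 : E1 = S 0 3 1 := by
  ext i j; fin_cases i <;> fin_cases j <;>
    simp [E1, Matrix.single, Matrix.vecHead, Matrix.vecTail] <;> norm_num
lemma hE2 : E2 = S 1 4 1 := by
  ext i j; fin_cases i <;> fin_cases j <;>
    simp [E2, Matrix.single, Matrix.vecHead, Matrix.vecTail] <;> norm_num
lemma hE3 : E3 = S 2 5 1 := by
  ext i j; fin_cases i <;> fin_cases j <;>
    simp [E3, Matrix.single, Matrix.vecHead, Matrix.vecTail] <;> norm_num
lemma hE31 : E31 = S 0 5 1 + S 2 3 1 := by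
  ext i j; fin_cases i <;> fin_cases j <;>
    simp [E31, Matrix.single, Matrix.vecHead, Matrix.vecTail] <;> norm_num
lemma hE32 : E32 = S 1 5 1 + S 2 4 1 := by
  ext i j; fin_cases i <;> fin_cases j <;>
    simp [E32, Matrix.single, Matrix.vecHead, Matrix.vecTail] <;> norm_num
lemma hA1 : A1 = S 0 0 (1/2) + S 3 3 (-(1/2)) := by
  ext i j; fin_cases i <;> fin_cases j <;>
    simp [A1, Matrix.single, Matrix.vecHead, Matrix.vecTail] <;> norm_num
lemma hA2 : A2 = S 1 1 (1/2) + S 4 4 (-(1/2)) := by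
  ext i j; fin_cases i <;> fin_cases j <;>
    simp [A2, Matrix.single, Matrix.vecHead, Matrix.vecTail] <;> norm_num
lemma hA3 : A3 = S 2 2 (1/2) + S 5 5 (-(1/2)) := by
  ext i j; fin_cases i <;> fin_cases j <;>
    simp [A3, Matrix.single, Matrix.vecHead, Matrix.vecTail] <;> norm_num
lemma hA31 : A31 = S 2 0 1 + S 3 5 (-1) := by
  ext i j; fin_cases i <;> fin_cases j <;>
    simp [A31, Matrix.single, Matrix.vecHead, Matrix.vecTail] <;> norm_num
lemma hA32 : A32 = S 2 1 1 + S 4 5 (-1) := by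
  ext i j; fin_cases i <;> fin_cases j <;>
    simp [A32, Matrix.single, Matrix.vecHead, Matrix.vecTail] <;> norm_num

end StdDecomp

/-- Every element of `bSub` almost-commutes with `E3`. -/
lemma bSub_eigen : ∀ x ∈ bSub, ∃ l : ℝ, x * E3 = l • E3 ∧ E3 * x = (-l) • E3 := by
  intro x hx
  induction hx using Submodule.span_induction with
  | mem z hz =>
    rcases hz with h | h | h | h | h | h | h | h | h | h <;> subst h
    · exact ⟨0, by rw [hE1, hE3]; simp [Matrix.single_mul_single_of_ne],
        by rw [hE1, hE3]; simp [Matrix.single_mul_single_of_ne]⟩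
    · exact ⟨0, by rw [hE2, hE3]; simp [Matrix.single_mul_single_of_ne],
        by rw [hE2, hE3]; simp [Matrix.single_mul_single_of_ne]⟩
    · exact ⟨0, by rw [hE3]; simp [Matrix.single_mul_single_of_ne],
        by rw [hE3]; simp [Matrix.single_mul_single_of_ne]⟩
    · exact ⟨0, by rw [hE31, hE3]; simp [add_mul, Matrix.single_mul_single_of_ne],
        by rw [hE31, hE3]; simp [mul_add, Matrix.single_mul_single_of_ne]⟩
    · exact ⟨0, by rw [hE32, hE3]; simp [add_mul, Matrix.single_mul_single_of_ne],
        by rw [hE32, hE3]; simp [mul_add, Matrix.single_mul_single_of_ne]⟩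
    · exact ⟨0, by rw [hA1, hE3]; simp [add_mul, Matrix.single_mul_single_of_ne],
        by rw [hA1, hE3]; simp [mul_add, Matrix.single_mul_single_of_ne]⟩
    · exact ⟨0, by rw [hA2, hE3]; simp [add_mul, Matrix.single_mul_single_of_ne],
        by rw [hA2, hE3]; simp [mul_add, Matrix.single_mul_single_of_ne]⟩
    · refine ⟨1/2, ?_, ?_⟩
      · rw [hA3, hE3]
        simp [add_mul, Matrix.single_mul_single_same, Matrix.single_mul_single_of_ne,
          Matrix.smul_single]
      · rw [hA3, hE3]
        simp [mul_add, Matrix.single_mul_single_same, Matrix.single_mul_single_of_ne,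
          Matrix.smul_single]
        rw [← neg_one_smul ℝ (Matrix.single (2 : Fin 6) (5 : Fin 6) ((2 : ℝ)⁻¹)),
          Matrix.smul_single]
        norm_num
    · exact ⟨0, by rw [hA31, hE3]; simp [add_mul, Matrix.single_mul_single_of_ne],
        by rw [hA31, hE3]; simp [mul_add, Matrix.single_mul_single_of_ne]⟩
    · exact ⟨0, by rw [hA32, hE3]; simp [add_mul, Matrix.single_mul_single_of_ne],
        by rw [hA32, hE3]; simp [mul_add, Matrix.single_mul_single_of_ne]⟩
  | zero => exact ⟨0, by simp, by simp⟩
  | add a b _ _ iha ihb =>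
    obtain ⟨l, h1, h2⟩ := iha
    obtain ⟨m, k1, k2⟩ := ihb
    exact ⟨l + m, by rw [add_mul, h1, k1, add_smul],
      by rw [mul_add, h2, k2, neg_add, add_smul]⟩
  | smul c a _ ih =>
    obtain ⟨l, h1, h2⟩ := ih
    refine ⟨c * l, by rw [smul_mul_assoc, h1, smul_smul], ?_⟩
    rw [Matrix.mul_smul, h2, smul_smul, mul_neg]

section ExpEigen

attribute [local instance] Matrix.linftyOpNormedRing Matrix.linftyOpNormedAlgebra

lemma exp_mul_right_eigen (x y : M6) (l : ℝ) (h : x * y = l • y) :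
    NormedSpace.exp x * y = Real.exp l • y := by
  have hpow : ∀ n : ℕ, x ^ n * y = l ^ n • y := by
    intro n
    induction n with
    | zero => simp
    | succ n ih =>
      rw [pow_succ, mul_assoc, h, Matrix.mul_smul, ih, smul_smul, ← pow_succ']
  have hsum : Summable fun n : ℕ => ((Nat.factorial n : ℕ) : ℝ)⁻¹ • x ^ n := NormedSpace.expSeries_summable' x
  have hmap : (∑' n : ℕ, ((Nat.factorial n : ℕ) : ℝ)⁻¹ • x ^ n) * y = ∑' n : ℕ, (((Nat.factorial n : ℕ) : ℝ)⁻¹ • x ^ n) * y := by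
    exact (hsum.tsum_mul_right y).symm
  have h2 : ∀ n : ℕ, (((Nat.factorial n : ℕ) : ℝ)⁻¹ • x ^ n) * y = (((Nat.factorial n : ℕ) : ℝ)⁻¹ * l ^ n) • y := by
    intro n; rw [smul_mul_assoc, hpow, smul_smul]
  have hsum2 : Summable fun n : ℕ => ((Nat.factorial n : ℕ) : ℝ)⁻¹ * l ^ n := by
    simpa [smul_eq_mul] using NormedSpace.expSeries_summable' (𝕂 := ℝ) l
  rw [NormedSpace.exp_eq_tsum ℝ, hmap]
  simp_rw [h2]
  rw [hsum2.tsum_smul_const]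
  congr 1
  rw [Real.exp_eq_exp_ℝ, NormedSpace.exp_eq_tsum ℝ]
  simp [smul_eq_mul]

lemma exp_mul_left_eigen (x y : M6) (l : ℝ) (h : y * x = l • y) :
    y * NormedSpace.exp x = Real.exp l • y := by
  have hpow : ∀ n : ℕ, y * x ^ n = l ^ n • y := by
    intro n
    induction n with
    | zero => simp
    | succ n ih =>
      rw [pow_succ, ← mul_assoc, ih, smul_mul_assoc, h, smul_smul, ← pow_succ]
  have hsum : Summable fun n : ℕ => ((Nat.factorial n : ℕ) : ℝ)⁻¹ • x ^ n := NormedSpace.expSeries_summable' x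
  have hmap : y * (∑' n : ℕ, ((Nat.factorial n : ℕ) : ℝ)⁻¹ • x ^ n) = ∑' n : ℕ, y * (((Nat.factorial n : ℕ) : ℝ)⁻¹ • x ^ n) := by
    exact (hsum.tsum_mul_left y).symm
  have h2 : ∀ n : ℕ, y * (((Nat.factorial n : ℕ) : ℝ)⁻¹ • x ^ n) = (((Nat.factorial n : ℕ) : ℝ)⁻¹ * l ^ n) • y := by
    intro n; rw [mul_smul_comm, hpow, smul_smul]
  have hsum2 : Summable fun n : ℕ => ((Nat.factorial n : ℕ) : ℝ)⁻¹ * l ^ n := by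
    simpa [smul_eq_mul] using NormedSpace.expSeries_summable' (𝕂 := ℝ) l
  rw [NormedSpace.exp_eq_tsum ℝ, hmap]
  simp_rw [h2]
  rw [hsum2.tsum_smul_const]
  congr 1
  rw [Real.exp_eq_exp_ℝ, NormedSpace.exp_eq_tsum ℝ]
  simp [smul_eq_mul]

end ExpEigen

lemma key_pos : ∀ g ∈ Bgrp, ∃ c : ℝ, 0 < c ∧ (↑g⁻¹ : M6) * E3 * (↑g : M6) = c • E3 := by
  intro g hg
  have hg' : g ∈ Subgroup.closure {u : M6ˣ | ∃ x ∈ bSub, (u : M6) = NormedSpace.exp x} := hg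
  clear hg
  induction hg' using Subgroup.closure_induction with
  | mem u hu =>
    obtain ⟨x, hx, hux⟩ := hu
    obtain ⟨l, h1, h2⟩ := bSub_eigen x hx
    have hR : (↑u : M6) * E3 = Real.exp l • E3 := by
      rw [hux]; exact exp_mul_right_eigen x E3 l h1
    have hL : E3 * (↑u : M6) = Real.exp (-l) • E3 := by
      rw [hux]; exact exp_mul_left_eigen x E3 (-l) h2
    have hInv : (↑u⁻¹ : M6) * E3 = Real.exp (-l) • E3 := by
      calc (↑u⁻¹ : M6) * E3
          = (↑u⁻¹ : M6) * (Real.exp (-l) • (Real.exp l • E3)) := by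
            rw [smul_smul, ← Real.exp_add, neg_add_cancel, Real.exp_zero, one_smul]
        _ = Real.exp (-l) • ((↑u⁻¹ : M6) * ((↑u : M6) * E3)) := by
            rw [← hR, Matrix.mul_smul]
        _ = Real.exp (-l) • E3 := by rw [← mul_assoc, Units.inv_mul, one_mul]
    refine ⟨Real.exp (-l) * Real.exp (-l), by positivity, ?_⟩
    rw [hInv, smul_mul_assoc, hL, smul_smul]
  | one => exact ⟨1, one_pos, by simp⟩
  | mul a b _ _ iha ihb =>
    obtain ⟨c, hc, he⟩ := iha
    obtain ⟨c', hc', he'⟩ := ihb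
    refine ⟨c * c', mul_pos hc hc', ?_⟩
    rw [_root_.mul_inv_rev, Units.val_mul, Units.val_mul]
    have : ((↑b⁻¹ : M6) * (↑a⁻¹ : M6)) * E3 * ((↑a : M6) * (↑b : M6))
        = (↑b⁻¹ : M6) * ((↑a⁻¹ : M6) * E3 * (↑a : M6)) * (↑b : M6) := by
      noncomm_ring
    rw [this, he, mul_smul_comm, smul_mul_assoc, he', smul_smul]
  | inv a _ ih =>
    obtain ⟨c, hc, he⟩ := ih
    refine ⟨c⁻¹, inv_pos.mpr hc, ?_⟩
    rw [inv_inv]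
    have h1 : (↑a : M6) * ((↑a⁻¹ : M6) * E3 * (↑a : M6)) * (↑a⁻¹ : M6) = E3 := by
      have : (↑a : M6) * ((↑a⁻¹ : M6) * E3 * (↑a : M6)) * (↑a⁻¹ : M6)
          = ((↑a : M6) * (↑a⁻¹ : M6)) * E3 * ((↑a : M6) * (↑a⁻¹ : M6)) := by noncomm_ring
      rw [this, Units.mul_inv, one_mul, mul_one]
    rw [he] at h1
    have h2 : (↑a : M6) * E3 * (↑a⁻¹ : M6) = c⁻¹ • E3 := by
      have := congrArg (fun M : M6 => c⁻¹ • M) h1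
      simp only [mul_smul_comm, smul_mul_assoc, smul_smul, inv_mul_cancel₀ hc.ne',
        one_smul] at this
      exact this
    exact h2

lemma E3_mem_bSub : E3 ∈ bSub :=
  Submodule.subset_span
    (Set.mem_insert_of_mem _ (Set.mem_insert_of_mem _ (Set.mem_insert _ _)))

theorem coadjoint_positivity_and_disjoint_orbits :
    -- every coadjoint transform of a linear form η with η(E3) > 0 again pairs
    -- positively with E3 (Ad*(g)η = η ∘ Ad(g⁻¹), Ad(g⁻¹)y = g⁻¹ y g)
    (∀ η : M6 →ₗ[ℝ] ℝ, 0 < η E3 →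
      ∀ g ∈ Bgrp, 0 < η ((↑g⁻¹ : M6) * E3 * (↑g : M6))) ∧
    -- hence the coadjoint B-orbits of −(E1*+E2*+E3*)|_b and (E1*+E2*+E3*)|_b
    -- are disjoint: no common coadjoint transform, as forms on b
    ¬ ∃ g ∈ Bgrp, ∃ g' ∈ Bgrp, ∀ y ∈ bSub,
        -fpos ((↑g⁻¹ : M6) * y * (↑g : M6)) = fpos ((↑g'⁻¹ : M6) * y * (↑g' : M6)) := by
  constructor
  · intro η hη g hg
    obtain ⟨c, hc, he⟩ := key_pos g hg
    rw [he, LinearMap.map_smul, smul_eq_mul]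
    exact mul_pos hc hη
  · rintro ⟨g, hg, g', hg', h⟩
    have hx := h E3 E3_mem_bSub
    obtain ⟨c, hc, he⟩ := key_pos g hg
    obtain ⟨c', hc', he'⟩ := key_pos g' hg'
    rw [he, he'] at hx
    have hval : ∀ r : ℝ, fpos (r • E3) = r := by
      intro r
      simp [fpos, E3, Matrix.smul_apply, Matrix.vecHead, Matrix.vecTail, smul_eq_mul]
    rw [hval, hval] at hx
    linarith
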